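/- Let C ≥ 1 and let B be a positive n×n real matrix with B(i,i) = 1 for all i and B(i,j)·B(i',j') ≥ C·B(i,j')·B(i',j) for all i < i' and j < j'. Then for every subset I of [n] with |I| = k ≥ 2 and every cyclic permutation γ of I, Π_{j∈I} B(j,γ(j)) ≤ C^{-(k-1)} · Π_{j∈I} B(j,j) = C^{-(k-1)}. -/

import Mathlib

open Finset Equiv Equiv.Perm in
private lemma cycle_aux (n : ℕ) (C : ℝ) (hC : 1 ≤ C) (B : Matrix (Fin n) (Fin n) ℝ)
    (hpos : ∀ i j, 0 < B i j) (hdiag : ∀ i, B i i = 1)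
    (h : ∀ i i' j j' : Fin n, i < i' → j < j' → C * (B i j' * B i' j) ≤ B i j * B i' j') :
    ∀ k (γ : Equiv.Perm (Fin n)), γ.IsCycle → γ.support.card = k →
      ∏ j ∈ γ.support, B j (γ j) ≤ 1 / C ^ (k - 1) := by
  have hC0 : (0:ℝ) < C := lt_of_lt_of_le one_pos hC
  intro k
  induction k using Nat.strong_induction_on with
  | _ k ih =>
    intro γ hγ hcard
    have hk2 : 2 ≤ k := hcard ▸ hγ.two_le_card_support
    by_cases hk : k = 2
    · -- base case: γ is a swap
      obtain ⟨x, y, hxy, rfl⟩ := card_support_eq_two.mp (hcard.trans hk)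
      rw [support_swap hxy]
      rw [Finset.prod_pair hxy, swap_apply_left, swap_apply_right, hk]
      have h21 : (2:ℕ) - 1 = 1 := rfl
      rw [h21, pow_one, le_div_iff₀ hC0]
      rcases hxy.lt_or_gt with hlt | hlt
      · have := h x y x y hlt hlt
        rw [hdiag x, hdiag y, one_mul] at this
        nlinarith [hpos x y, hpos y x]
      · have := h y x y x hlt hlt
        rw [hdiag x, hdiag y, one_mul] at this
        nlinarith [hpos x y, hpos y x]
    · -- inductive step
      have hk3 : 3 ≤ k := by omega
      have hne : γ.support.Nonempty := Finset.card_pos.mp (by omega)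
      set b := γ.support.max' hne with hbdef
      have hbmem : b ∈ γ.support := γ.support.max'_mem hne
      have hb : γ b ≠ b := mem_support.mp hbmem
      set c := γ b with hcdef
      have hffb : γ (γ b) ≠ b := by
        intro hff
        have := hγ.eq_swap_of_apply_apply_eq_self hb hff
        rw [this, card_support_swap hb.symm] at hcard
        omega
      set a := γ⁻¹ b with hadef
      have hga : γ a = b := γ.apply_symm_apply b
      have hab : a ≠ b := by
        intro heq; exact hb (by rw [hcdef, ← heq, hga]; exact heq.symm)
      have hamem : a ∈ γ.support := mem_support.mpr (by rw [hga]; exact hab.symm)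
      have hcb : c ≠ b := hb
      have hcmem : c ∈ γ.support := apply_mem_support.mpr hbmem
      have halt : a < b := lt_of_le_of_ne (γ.support.le_max' a hamem) hab
      have hclt : c < b := lt_of_le_of_ne (γ.support.le_max' c hcmem) hcb
      -- the shortcut inequality
      have key : C * (B a b * B b c) ≤ B a c := by
        have := h a b c b halt hclt
        rwa [hdiag b, mul_one] at this
      -- the shorter cycle
      set γ' : Equiv.Perm (Fin n) := Equiv.swap b (γ b) * γ with hγ'def
      have hcyc' : γ'.IsCycle := hγ.swap_mul hb hffb
      have hsupp' : γ'.support = γ.support.erase b := by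
        rw [hγ'def, support_swap_mul_eq γ b hffb, Finset.sdiff_singleton_eq_erase]
      have hcard' : γ'.support.card = k - 1 := by
        rw [hsupp', Finset.card_erase_of_mem hbmem, hcard]
      have hIH := ih (k - 1) (by omega) γ' hcyc' hcard'
      -- γ' agrees with γ away from a and b; γ' a = c
      have hγ'a : γ' a = c := by
        rw [hγ'def, Equiv.Perm.mul_apply, hga, ← hcdef, swap_apply_left]
      have hγ'j : ∀ j ∈ (γ.support.erase b).erase a, γ' j = γ j := by
        intro j hj
        have hja : j ≠ a := Finset.ne_of_mem_erase hj
        have hjb : j ≠ b := Finset.ne_of_mem_erase (Finset.mem_of_mem_erase hj)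
        have h1 : γ j ≠ b := fun hh => hja (by rw [← hga] at hh; exact γ.injective hh)
        have h2 : γ j ≠ γ b := fun hh => hjb (γ.injective hh)
        rw [hγ'def, Equiv.Perm.mul_apply, swap_apply_of_ne_of_ne h1 h2]
      have hamem' : a ∈ γ.support.erase b := Finset.mem_erase.mpr ⟨hab, hamem⟩
      -- product decompositions
      set Q := ∏ j ∈ (γ.support.erase b).erase a, B j (γ j) with hQ
      have hQpos : 0 < Q := Finset.prod_pos fun j _ => hpos _ _
      have hP1 : ∏ j ∈ γ.support, B j (γ j) = B b c * (B a b * Q) := by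
        rw [← Finset.mul_prod_erase _ _ hbmem, ← Finset.mul_prod_erase _ _ hamem', hga, ← hcdef]
      have hP3 : ∏ j ∈ γ'.support, B j (γ' j) = B a c * Q := by
        rw [hsupp', ← Finset.mul_prod_erase _ _ hamem', hγ'a]
        congr 1
        exact Finset.prod_congr rfl fun j hj => by rw [hγ'j j hj]
      have hstep : ∏ j ∈ γ.support, B j (γ j) ≤ (1 / C) * (B a c * Q) := by
        rw [hP1, div_mul_eq_mul_div, one_mul, le_div_iff₀ hC0]
        nlinarith [mul_le_mul_of_nonneg_right key hQpos.le]
      have hpow : C ^ (k - 1) = C * C ^ (k - 2) := by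
        have : k - 1 = (k - 2) + 1 := by omega
        rw [this, pow_succ]; ring
      calc ∏ j ∈ γ.support, B j (γ j) ≤ (1 / C) * (B a c * Q) := hstep
        _ = (1 / C) * ∏ j ∈ γ'.support, B j (γ' j) := by rw [hP3]
        _ ≤ (1 / C) * (1 / C ^ (k - 1 - 1)) := by
            apply mul_le_mul_of_nonneg_left hIH (by positivity)
        _ = 1 / C ^ (k - 1) := by
            rw [hpow]
            have : k - 1 - 1 = k - 2 := by omega
            rw [this, div_mul_div_comm, one_mul]

/-- For a positive matrix in TN_{2,C} with unit diagonal, the product of entries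
along any cycle is at most C^{-(k-1)} times the corresponding diagonal product,
the latter being equal to 1. -/
theorem cycle_product_bound (n : ℕ) (C : ℝ) (hC : 1 ≤ C) (B : Matrix (Fin n) (Fin n) ℝ)
    (hpos : ∀ i j, 0 < B i j) (hdiag : ∀ i, B i i = 1)
    (h : ∀ i i' j j' : Fin n, i < i' → j < j' → C * (B i j' * B i' j) ≤ B i j * B i' j') :
    ∀ γ : Equiv.Perm (Fin n), γ.IsCycle →
      ∏ j ∈ γ.support, B j (γ j) ≤
        (1 / C ^ (γ.support.card - 1)) * ∏ j ∈ γ.support, B j j ∧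
      ∏ j ∈ γ.support, B j j = 1 := by
  intro γ hγ
  have hone : ∏ j ∈ γ.support, B j j = 1 :=
    Finset.prod_eq_one fun j _ => hdiag j
  refine ⟨?_, hone⟩
  rw [hone, mul_one]
  exact cycle_aux n C hC B hpos hdiag h γ.support.card γ hγ rfl
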